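/- arXiv:2112.15266 — 3 statements merged into one kernel-verified Lean document; each statement's English description precedes it below -/
import Mathlib

section
/- Let J(α₊,β₊,α₋,β₋) = I(ρ(α₊,β₊), ρ(α₋,β₋), w(α₊,β₊), w(α₋,β₋)) where I is the jump function, ρ, w are the smooth inverse functions of the Riemann-invariant change of variables (so ∂ρ/∂β = ρ/(2η) and ∂w/∂β = -1/2 at the plus state). Then, at any point where the jump conditions V = [ρw]/[ρ] and I = 0 hold, ∂J/∂β₊ = -([ρ]ρ₊/(2η₊))·(V - c_in₊)² and ∂J/∂α₊ = -([ρ]ρ₊/(2η₊))·(c_out₊ - V)², where c_in₊ = w₊ - η₊ and c_out₊ = w₊ + η₊. -/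
/-- For the jump function in Riemann-invariant variables,
`J(α₊,β₊,α₋,β₋) = I(ρ(α₊,β₊), ρ(α₋,β₋), w(α₊,β₊), w(α₋,β₋))`, where `ρ, w`
invert the Riemann-invariant change of variables (so at the plus state
`∂ρ/∂β = ρ/(2η)`, `∂w/∂β = -1/2`, `∂ρ/∂α = ρ/(2η)`, `∂w/∂α = 1/2`), at any
point where `V = [ρw]/[ρ]` and `I = 0` one has
`∂J/∂β₊ = -([ρ]ρ₊/(2η₊))(V - c_in₊)²` and `∂J/∂α₊ = -([ρ]ρ₊/(2η₊))(c_out₊ - V)²`. -/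
theorem jump_function_riemann_partials
    (p η : ℝ → ℝ) (ρf wf : ℝ → ℝ → ℝ) (αp βp αm βm V : ℝ)
    (hηpos : 0 < η (ρf αp βp)) (hρpos : 0 < ρf αp βp)
    (hjump : ρf αp βp - ρf αm βm ≠ 0)
    (hp : HasDerivAt p (η (ρf αp βp) ^ 2) (ρf αp βp))
    (hρβ : HasDerivAt (fun b => ρf αp b)
      (ρf αp βp / (2 * η (ρf αp βp))) βp)
    (hwβ : HasDerivAt (fun b => wf αp b) (-(1 / 2)) βp)
    (hρα : HasDerivAt (fun a => ρf a βp)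
      (ρf αp βp / (2 * η (ρf αp βp))) αp)
    (hwα : HasDerivAt (fun a => wf a βp) (1 / 2) αp)
    (hV : V = (ρf αp βp * wf αp βp - ρf αm βm * wf αm βm) /
      (ρf αp βp - ρf αm βm))
    (hI : (ρf αp βp * wf αp βp - ρf αm βm * wf αm βm) ^ 2 -
        ((ρf αp βp * wf αp βp ^ 2 + p (ρf αp βp)) -
          (ρf αm βm * wf αm βm ^ 2 + p (ρf αm βm))) *
          (ρf αp βp - ρf αm βm) = 0) :
    HasDerivAt
        (fun b => (ρf αp b * wf αp b - ρf αm βm * wf αm βm) ^ 2 -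
          ((ρf αp b * wf αp b ^ 2 + p (ρf αp b)) -
            (ρf αm βm * wf αm βm ^ 2 + p (ρf αm βm))) *
            (ρf αp b - ρf αm βm))
        (-((ρf αp βp - ρf αm βm) * ρf αp βp / (2 * η (ρf αp βp))) *
          (V - (wf αp βp - η (ρf αp βp))) ^ 2) βp ∧
      HasDerivAt
        (fun a => (ρf a βp * wf a βp - ρf αm βm * wf αm βm) ^ 2 -
          ((ρf a βp * wf a βp ^ 2 + p (ρf a βp)) -
            (ρf αm βm * wf αm βm ^ 2 + p (ρf αm βm))) *
            (ρf a βp - ρf αm βm))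
        (-((ρf αp βp - ρf αm βm) * ρf αp βp / (2 * η (ρf αp βp))) *
          ((wf αp βp + η (ρf αp βp)) - V) ^ 2) αp := by

  have hη : η (ρf αp βp) ≠ 0 := hηpos.ne'
  constructor
  · have h := (((hρβ.mul hwβ).sub_const (ρf αm βm * wf αm βm)).pow 2).sub
      ((((hρβ.mul (hwβ.pow 2)).add ((hp.comp βp hρβ))).sub_const
        (ρf αm βm * wf αm βm ^ 2 + p (ρf αm βm))).mul (hρβ.sub_const (ρf αm βm)))
    refine h.congr_deriv (Eq.symm ?_)
    subst hV
    simp only [Pi.mul_apply, Pi.pow_apply, Pi.add_apply, Function.comp_apply]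
    linear_combination (norm := skip) (-(ρf αp βp) / (2 * η (ρf αp βp) * (ρf αp βp - ρf αm βm))) * hI
    field_simp
    ring
  · have h := (((hρα.mul hwα).sub_const (ρf αm βm * wf αm βm)).pow 2).sub
      ((((hρα.mul (hwα.pow 2)).add ((hp.comp αp hρα))).sub_const
        (ρf αm βm * wf αm βm ^ 2 + p (ρf αm βm))).mul (hρα.sub_const (ρf αm βm)))
    refine h.congr_deriv (Eq.symm ?_)
    subst hV
    simp only [Pi.mul_apply, Pi.pow_apply, Pi.add_apply, Function.comp_apply]
    linear_combination (norm := skip) (-(ρf αp βp) / (2 * η (ρf αp βp) * (ρf αp βp - ρf αm βm))) * hI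
    field_simp
    ring
end

section
/- Let f ∈ C¹[0,∞) be increasing with f(0) = 0, f'(0) = a ∈ (0,1), and f(x) < x for x > 0. Then there exists ε* > 0 and an increasing function φ : [0,ε*] → ℝ with φ(0) = 0 solving the conjugacy (linearization) equation φ(a x) = f(φ(x)) for all x ∈ [0,ε*]. -/
open Set Function

open Classical in
/-- Band index: least `n` with `a^(n+1) < x`. -/
noncomputable def bandN (a x : ℝ) : ℕ :=
  if h : ∃ n : ℕ, a ^ (n + 1) < x then Nat.find h else 0

/-- Piecewise conjugacy: on band `n`, apply `f^[n]` to a linear straightening. -/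
noncomputable def conjPhi (f : ℝ → ℝ) (a : ℝ) (x : ℝ) : ℝ :=
  if x ≤ 0 then 0
  else f^[bandN a x] (f 1 + (x / a ^ bandN a x - a) * ((1 - f 1) / (1 - a)))

/-- Linearization of a one-dimensional contraction at its fixed point: if
`f ∈ C¹[0,∞)` is increasing with `f(0) = 0`, `f'(0) = a ∈ (0,1)` and
`f(x) < x` for `x > 0`, then there are `ε* > 0` and an increasing `φ` with
`φ(0) = 0` solving `φ(ax) = f(φ(x))` on `[0, ε*]`. -/
theorem conjugacy_exists
    (f : ℝ → ℝ) (a : ℝ)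
    (hf : ContDiffOn ℝ 1 f (Set.Ici 0))
    (hmono : StrictMonoOn f (Set.Ici 0))
    (hf0 : f 0 = 0)
    (hfa : HasDerivWithinAt f a (Set.Ici 0) 0)
    (ha : 0 < a) (ha1 : a < 1)
    (hlt : ∀ x, 0 < x → f x < x) :
    ∃ ε > 0, ∃ φ : ℝ → ℝ,
      StrictMonoOn φ (Set.Icc 0 ε) ∧ φ 0 = 0 ∧
        ∀ x ∈ Set.Icc 0 ε, φ (a * x) = f (φ x) := by
  classical
  have hf1 : f 1 < 1 := hlt 1 one_pos
  have hf1pos : 0 < f 1 := by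
    have h := hmono (Set.mem_Ici.mpr (le_refl 0)) (by norm_num : (1:ℝ) ∈ Ici 0) one_pos
    rwa [hf0] at h
  have fpos : ∀ u, 0 < u → 0 < f u := fun u hu => by
    have h := hmono (Set.mem_Ici.mpr (le_refl 0)) (le_of_lt hu) hu
    rwa [hf0] at h
  have fnonneg : ∀ u, 0 ≤ u → 0 ≤ f u := fun u hu => by
    rcases eq_or_lt_of_le hu with h | h
    · rw [← h, hf0]
    · exact (fpos u h).le
  have iternonneg : ∀ n u, 0 ≤ u → 0 ≤ f^[n] u := by
    intro n
    induction n with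
    | zero => intro u hu; simpa using hu
    | succ n ih =>
      intro u hu
      rw [Function.iterate_succ_apply']
      exact fnonneg _ (ih u hu)
  have iterpos : ∀ n u, 0 < u → 0 < f^[n] u := by
    intro n
    induction n with
    | zero => intro u hu; simpa using hu
    | succ n ih =>
      intro u hu
      rw [Function.iterate_succ_apply']
      exact fpos _ (ih u hu)
  have itermono : ∀ n u v, 0 ≤ u → u < v → f^[n] u < f^[n] v := by
    intro n
    induction n with
    | zero => intro u v _ huv; simpa using huv
    | succ n ih =>
      intro u v hu huv
      rw [Function.iterate_succ_apply', Function.iterate_succ_apply']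
      exact hmono (iternonneg n u hu) (iternonneg n v (hu.trans huv.le))
        (ih u v hu huv)
  have iterle : ∀ n u v, 0 ≤ u → u ≤ v → f^[n] u ≤ f^[n] v := by
    intro n u v hu huv
    rcases eq_or_lt_of_le huv with h | h
    · rw [h]
    · exact (itermono n u v hu h).le
  have iterantitone : ∀ n m : ℕ, n ≤ m → f^[m] 1 ≤ f^[n] 1 := by
    have step : ∀ n : ℕ, f^[n + 1] 1 ≤ f^[n] 1 := by
      intro n
      rw [Function.iterate_succ_apply']
      exact (hlt _ (iterpos n 1 one_pos)).le
    have h : Antitone fun n : ℕ => f^[n] 1 := antitone_nat_of_succ_le step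
    intro n m hnm
    exact h hnm
  -- existence of bands
  have hex : ∀ x : ℝ, 0 < x → ∃ n : ℕ, a ^ (n + 1) < x := by
    intro x hx
    obtain ⟨n, hn⟩ := exists_pow_lt_of_lt_one hx ha1
    refine ⟨n, lt_of_le_of_lt ?_ hn⟩
    exact pow_le_pow_of_le_one ha.le ha1.le (Nat.le_succ n)
  have hNspec : ∀ x : ℝ, 0 < x → a ^ (bandN a x + 1) < x := by
    intro x hx
    rw [bandN, dif_pos (hex x hx)]
    exact Nat.find_spec (hex x hx)
  have hNub : ∀ x : ℝ, 0 < x → x ≤ 1 → x ≤ a ^ bandN a x := by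
    intro x hx hx1
    rw [bandN, dif_pos (hex x hx)]
    rcases Nat.eq_zero_or_pos (Nat.find (hex x hx)) with h | h
    · rw [h]; simpa using hx1
    · obtain ⟨m, hm⟩ := Nat.exists_eq_succ_of_ne_zero h.ne'
      rw [hm]
      have := Nat.find_min (hex x hx) (by omega : m < Nat.find (hex x hx))
      push_neg at this
      simpa using this
  have hNmono : ∀ x y : ℝ, 0 < x → x ≤ y → bandN a y ≤ bandN a x := by
    intro x y hx hxy
    have hy : 0 < y := hx.trans_le hxy
    rw [bandN, dif_pos (hex y hy), bandN, dif_pos (hex x hx)]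
    exact Nat.find_le (lt_of_lt_of_le (Nat.find_spec (hex x hx)) hxy)
  have hband : ∀ x : ℝ, 0 < x → x ≤ 1 →
      a < x / a ^ bandN a x ∧ x / a ^ bandN a x ≤ 1 := by
    intro x hx hx1
    have hpow : (0:ℝ) < a ^ bandN a x := pow_pos ha _
    constructor
    · rw [lt_div_iff₀ hpow]
      calc a * a ^ bandN a x = a ^ (bandN a x + 1) := by ring
        _ < x := hNspec x hx
    · rw [div_le_one hpow]
      exact hNub x hx hx1
  -- the linear straightening map
  set L : ℝ → ℝ := fun t => f 1 + (t - a) * ((1 - f 1) / (1 - a)) with hL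
  have hslope : 0 < (1 - f 1) / (1 - a) :=
    div_pos (by linarith) (by linarith)
  have hLmono : StrictMono L := by
    intro u v huv
    simp only [hL]
    have := mul_lt_mul_of_pos_right (sub_lt_sub_right huv a) hslope
    linarith
  have hLa : L a = f 1 := by simp [hL]
  have hL1 : L 1 = 1 := by
    have hne : (1:ℝ) - a ≠ 0 := by linarith
    simp only [hL]
    field_simp
    ring
  have hLpos : ∀ t, a < t → 0 < L t := by
    intro t ht
    have := hLmono ht
    rw [hLa] at this
    linarith
  have hLle1 : ∀ t, t ≤ 1 → L t ≤ 1 := by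
    intro t ht
    rcases eq_or_lt_of_le ht with h | h
    · rw [h, hL1]
    · have := hLmono h; rw [hL1] at this; exact this.le
  -- rewriting lemma for φ
  have hφ : ∀ x : ℝ, 0 < x →
      conjPhi f a x = f^[bandN a x] (L (x / a ^ bandN a x)) := by
    intro x hx
    rw [conjPhi, if_neg (not_le.mpr hx)]
  have hφ0 : conjPhi f a 0 = 0 := by rw [conjPhi, if_pos le_rfl]
  -- band of a*x
  have hNstep : ∀ x : ℝ, 0 < x → x ≤ 1 → bandN a (a * x) = bandN a x + 1 := by
    intro x hx hx1
    have hax : 0 < a * x := mul_pos ha hx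
    apply le_antisymm
    · rw [bandN, dif_pos (hex _ hax)]
      apply Nat.find_le
      calc a ^ (bandN a x + 1 + 1) = a * a ^ (bandN a x + 1) := by ring
        _ < a * x := by
            exact mul_lt_mul_of_pos_left (hNspec x hx) ha
    · by_contra hcon
      push_neg at hcon
      have hm : bandN a (a * x) ≤ bandN a x := by omega
      have h1 : a ^ (bandN a (a * x) + 1) < a * x := hNspec _ hax
      have h2 : x ≤ a ^ bandN a x := hNub x hx hx1
      have h3 : a ^ bandN a x ≤ a ^ bandN a (a * x) :=
        pow_le_pow_of_le_one ha.le ha1.le hm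
      have h4 : a * x ≤ a * a ^ bandN a (a * x) :=
        mul_le_mul_of_nonneg_left (h2.trans h3) ha.le
      have : a * a ^ bandN a (a * x) = a ^ (bandN a (a * x) + 1) := by ring
      linarith
  refine ⟨1, one_pos, conjPhi f a, ?_, hφ0, ?_⟩
  · -- strict monotonicity on [0,1]
    intro x hx y hy hxy
    rcases eq_or_lt_of_le hx.1 with h0 | h0
    · -- x = 0
      rw [← h0, hφ0]
      have hypos : 0 < y := by rw [← h0] at hxy; exact hxy
      rw [hφ y hypos]
      exact iterpos _ _ (hLpos _ (hband y hypos hy.2).1)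
    · -- 0 < x < y
      rw [hφ x h0, hφ y (h0.trans hxy)]
      have hypos : 0 < y := h0.trans hxy
      obtain ⟨htx1, htx2⟩ := hband x h0 hx.2
      obtain ⟨hty1, hty2⟩ := hband y hypos hy.2
      have hnm : bandN a y ≤ bandN a x := hNmono x y h0 hxy.le
      rcases eq_or_lt_of_le hnm with heq | hlt'
      · -- same band
        rw [heq]
        apply itermono _ _ _ (hLpos _ htx1).le
        exact hLmono ((div_lt_div_iff_of_pos_right (pow_pos ha _)).mpr hxy)
      · -- x in a deeper band
        have h1 : f^[bandN a x] (L (x / a ^ bandN a x)) ≤ f^[bandN a x] 1 := by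
          have := iterle (bandN a x) _ 1 (hLpos _ htx1).le (hLle1 _ htx2)
          simpa using this
        have h2 : f^[bandN a x] 1 ≤ f^[bandN a y + 1] 1 :=
          iterantitone _ _ (by omega)
        have h3 : f^[bandN a y + 1] 1 = f^[bandN a y] (f 1) := by
          rw [Function.iterate_succ_apply]
        have h4 : f^[bandN a y] (f 1) < f^[bandN a y] (L (y / a ^ bandN a y)) := by
          rw [← hLa]
          exact itermono _ _ _ (by rw [hLa]; exact hf1pos.le) (hLmono hty1)
        linarith
  · -- the conjugacy equation
    intro x hx
    rcases eq_or_lt_of_le hx.1 with h0 | h0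
    · rw [← h0, mul_zero, hφ0, hf0]
    · have hax : 0 < a * x := mul_pos ha h0
      rw [hφ _ hax, hφ x h0, hNstep x h0 hx.2]
      have hdiv : a * x / a ^ (bandN a x + 1) = x / a ^ bandN a x := by
        rw [pow_succ]
        field_simp
      rw [hdiv, Function.iterate_succ_apply']
end

section
/- Let x, t be C² on a region, satisfying the characteristic equations ∂x/∂v = c_out ∂t/∂v and ∂x/∂u = c_in ∂t/∂u with c_out ≠ c_in, c_in, c_out nonvanishing and C¹. Then the mixed second derivative satisfies ∂²x/∂u∂v = μ ∂x/∂u + ν ∂x/∂v, where μ = (1/(c_out - c_in))·(c_out/c_in)·∂c_in/∂v and ν = -(1/(c_out - c_in))·(c_in/c_out)·∂c_out/∂u. -/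
lemma slice_v_hasDerivAt {f : ℝ × ℝ → ℝ} (u v : ℝ) (hf : DifferentiableAt ℝ f (u, v)) :
    HasDerivAt (fun v' => f (u, v')) (fderiv ℝ f (u, v) (0, 1)) v := by
  have h1 : HasDerivAt (fun v' : ℝ => ((u, v') : ℝ × ℝ)) ((0 : ℝ), (1 : ℝ)) v :=
    (hasDerivAt_const v u).prodMk (hasDerivAt_id v)
  exact hf.hasFDerivAt.comp_hasDerivAt v h1

lemma slice_u_hasDerivAt {f : ℝ × ℝ → ℝ} (u v : ℝ) (hf : DifferentiableAt ℝ f (u, v)) :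
    HasDerivAt (fun u' => f (u', v)) (fderiv ℝ f (u, v) (1, 0)) u := by
  have h1 : HasDerivAt (fun u' : ℝ => ((u', v) : ℝ × ℝ)) ((1 : ℝ), (0 : ℝ)) u :=
    (hasDerivAt_id u).prodMk (hasDerivAt_const u v)
  exact hf.hasFDerivAt.comp_hasDerivAt u h1

lemma partial_contDiff (w : ℝ × ℝ) {f : ℝ × ℝ → ℝ} (hf : ContDiff ℝ 2 f) :
    ContDiff ℝ 1 (fun q => fderiv ℝ f q w) :=
  (hf.fderiv_right (by norm_num)).clm_apply contDiff_const

lemma fderiv_partial (w z : ℝ × ℝ) {f : ℝ × ℝ → ℝ} (hf : ContDiff ℝ 2 f) (q : ℝ × ℝ) :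
    fderiv ℝ (fun p => fderiv ℝ f p w) q z = fderiv ℝ (fderiv ℝ f) q z w := by
  have hd : DifferentiableAt ℝ (fderiv ℝ f) q :=
    ((hf.fderiv_right (m := 1) (by norm_num)).differentiable one_ne_zero) q
  have := ((ContinuousLinearMap.apply ℝ ℝ w).hasFDerivAt.comp q hd.hasFDerivAt).fderiv
  calc fderiv ℝ (fun p => fderiv ℝ f p w) q z
      = (((ContinuousLinearMap.apply ℝ ℝ w)).comp (fderiv ℝ (fderiv ℝ f) q)) z := by
        rw [← this]; rfl
    _ = fderiv ℝ (fderiv ℝ f) q z w := rfl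

/-- For `x, t` C² satisfying the characteristic equations
`∂x/∂v = c_out ∂t/∂v`, `∂x/∂u = c_in ∂t/∂u` on an open region, with
`c_in, c_out` C¹, nonvanishing and `c_out ≠ c_in`, the mixed second derivative
satisfies `∂²x/∂u∂v = μ ∂x/∂u + ν ∂x/∂v` with
`μ = (1/(c_out - c_in))(c_out/c_in) ∂c_in/∂v` and
`ν = -(1/(c_out - c_in))(c_in/c_out) ∂c_out/∂u`. -/
theorem mixed_derivative_equation
    (U : Set (ℝ × ℝ)) (hU : IsOpen U)
    (x t cin cout : ℝ → ℝ → ℝ)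
    (hx : ContDiff ℝ 2 (fun q : ℝ × ℝ => x q.1 q.2))
    (ht : ContDiff ℝ 2 (fun q : ℝ × ℝ => t q.1 q.2))
    (hcin : ContDiff ℝ 1 (fun q : ℝ × ℝ => cin q.1 q.2))
    (hcout : ContDiff ℝ 1 (fun q : ℝ × ℝ => cout q.1 q.2))
    (hne : ∀ u v : ℝ, (u, v) ∈ U → cout u v ≠ cin u v)
    (hcin0 : ∀ u v : ℝ, (u, v) ∈ U → cin u v ≠ 0)
    (hcout0 : ∀ u v : ℝ, (u, v) ∈ U → cout u v ≠ 0)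
    (hcharv : ∀ u v : ℝ, (u, v) ∈ U →
      deriv (fun v' => x u v') v = cout u v * deriv (fun v' => t u v') v)
    (hcharu : ∀ u v : ℝ, (u, v) ∈ U →
      deriv (fun u' => x u' v) u = cin u v * deriv (fun u' => t u' v) u) :
    ∀ u v : ℝ, (u, v) ∈ U →
      deriv (fun u' => deriv (fun v' => x u' v') v) u =
        (1 / (cout u v - cin u v)) * (cout u v / cin u v) *
            deriv (fun v' => cin u v') v * deriv (fun u' => x u' v) u +
          (-(1 / (cout u v - cin u v)) * (cin u v / cout u v) *
            deriv (fun u' => cout u' v) u) * deriv (fun v' => x u v') v := by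
  intro u v huv
  set X : ℝ × ℝ → ℝ := fun q => x q.1 q.2 with hXdef
  set T : ℝ × ℝ → ℝ := fun q => t q.1 q.2 with hTdef
  set Cin : ℝ × ℝ → ℝ := fun q => cin q.1 q.2 with hCindef
  set Cout : ℝ × ℝ → ℝ := fun q => cout q.1 q.2 with hCoutdef
  have hXd : Differentiable ℝ X := hx.differentiable (by norm_num)
  have hTd : Differentiable ℝ T := ht.differentiable (by norm_num)
  have hCind : Differentiable ℝ Cin := hcin.differentiable one_ne_zero
  have hCoutd : Differentiable ℝ Cout := hcout.differentiable one_ne_zero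
  have hpx2 : Differentiable ℝ (fun q => fderiv ℝ X q (0, 1)) :=
    (partial_contDiff _ hx).differentiable one_ne_zero
  have hpx1 : Differentiable ℝ (fun q => fderiv ℝ X q (1, 0)) :=
    (partial_contDiff _ hx).differentiable one_ne_zero
  have hpt2 : Differentiable ℝ (fun q => fderiv ℝ T q (0, 1)) :=
    (partial_contDiff _ ht).differentiable one_ne_zero
  have hpt1 : Differentiable ℝ (fun q => fderiv ℝ T q (1, 0)) :=
    (partial_contDiff _ ht).differentiable one_ne_zero
  -- slice conversions
  have cx_v : ∀ u' v' : ℝ, deriv (fun v'' => x u' v'') v' = fderiv ℝ X (u', v') (0, 1) :=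
    fun u' v' => (slice_v_hasDerivAt u' v' (hXd (u', v'))).deriv
  have cx_u : ∀ u' v' : ℝ, deriv (fun u'' => x u'' v') u' = fderiv ℝ X (u', v') (1, 0) :=
    fun u' v' => (slice_u_hasDerivAt u' v' (hXd (u', v'))).deriv
  have ct_v : ∀ u' v' : ℝ, deriv (fun v'' => t u' v'') v' = fderiv ℝ T (u', v') (0, 1) :=
    fun u' v' => (slice_v_hasDerivAt u' v' (hTd (u', v'))).deriv
  have ct_u : ∀ u' v' : ℝ, deriv (fun u'' => t u'' v') u' = fderiv ℝ T (u', v') (1, 0) :=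
    fun u' v' => (slice_u_hasDerivAt u' v' (hTd (u', v'))).deriv
  have cc_v : deriv (fun v'' => cin u v'') v = fderiv ℝ Cin (u, v) (0, 1) :=
    (slice_v_hasDerivAt u v (hCind (u, v))).deriv
  have cc_u : deriv (fun u'' => cout u'' v) u = fderiv ℝ Cout (u, v) (1, 0) :=
    (slice_u_hasDerivAt u v (hCoutd (u, v))).deriv
  -- second-derivative symmetry
  have symX : fderiv ℝ (fderiv ℝ X) (u, v) (1, 0) (0, 1)
      = fderiv ℝ (fderiv ℝ X) (u, v) (0, 1) (1, 0) :=
    (hx.contDiffAt.isSymmSndFDerivAt (by simp [minSmoothness_of_isRCLikeNormedField])) _ _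
  have symT : fderiv ℝ (fderiv ℝ T) (u, v) (1, 0) (0, 1)
      = fderiv ℝ (fderiv ℝ T) (u, v) (0, 1) (1, 0) :=
    (ht.contDiffAt.isSymmSndFDerivAt (by simp [minSmoothness_of_isRCLikeNormedField])) _ _
  -- neighborhood facts
  have hnbu : ∀ᶠ u' in nhds u, (u', v) ∈ U := by
    have hc : ContinuousAt (fun u' : ℝ => ((u', v) : ℝ × ℝ)) u := by fun_prop
    exact hc.preimage_mem_nhds (hU.mem_nhds huv)
  have hnbv : ∀ᶠ v' in nhds v, (u, v') ∈ U := by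
    have hc : ContinuousAt (fun v' : ℝ => ((u, v') : ℝ × ℝ)) v := by fun_prop
    exact hc.preimage_mem_nhds (hU.mem_nhds huv)
  -- Equation 1: differentiate hcharv in u
  have heq1 : (fun u' => fderiv ℝ X (u', v) (0, 1))
      =ᶠ[nhds u] (fun u' => cout u' v * fderiv ℝ T (u', v) (0, 1)) := by
    filter_upwards [hnbu] with u' hu'
    rw [← cx_v u' v, ← ct_v u' v]
    exact hcharv u' v hu'
  have hd1L : deriv (fun u' => fderiv ℝ X (u', v) (0, 1)) u
      = fderiv ℝ (fderiv ℝ X) (u, v) (1, 0) (0, 1) := by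
    rw [(slice_u_hasDerivAt u v (hpx2 (u, v))).deriv]
    exact fderiv_partial _ _ hx _
  have hCoutslice : HasDerivAt (fun u' => cout u' v) (fderiv ℝ Cout (u, v) (1, 0)) u :=
    slice_u_hasDerivAt u v (hCoutd (u, v))
  have hTslice : HasDerivAt (fun u' => fderiv ℝ T (u', v) (0, 1))
      (fderiv ℝ (fderiv ℝ T) (u, v) (1, 0) (0, 1)) u := by
    rw [← fderiv_partial _ _ ht]
    exact slice_u_hasDerivAt u v (hpt2 (u, v))
  have eq1 : fderiv ℝ (fderiv ℝ X) (u, v) (1, 0) (0, 1)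
      = fderiv ℝ Cout (u, v) (1, 0) * fderiv ℝ T (u, v) (0, 1)
        + cout u v * fderiv ℝ (fderiv ℝ T) (u, v) (1, 0) (0, 1) := by
    rw [← hd1L, heq1.deriv_eq, (hCoutslice.fun_mul hTslice).deriv]
  -- Equation 2: differentiate hcharu in v
  have heq2 : (fun v' => fderiv ℝ X (u, v') (1, 0))
      =ᶠ[nhds v] (fun v' => cin u v' * fderiv ℝ T (u, v') (1, 0)) := by
    filter_upwards [hnbv] with v' hv'
    rw [← cx_u u v', ← ct_u u v']
    exact hcharu u v' hv'
  have hd2L : deriv (fun v' => fderiv ℝ X (u, v') (1, 0)) v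
      = fderiv ℝ (fderiv ℝ X) (u, v) (0, 1) (1, 0) := by
    rw [(slice_v_hasDerivAt u v (hpx1 (u, v))).deriv]
    exact fderiv_partial _ _ hx _
  have hCinslice : HasDerivAt (fun v' => cin u v') (fderiv ℝ Cin (u, v) (0, 1)) v :=
    slice_v_hasDerivAt u v (hCind (u, v))
  have hTslice2 : HasDerivAt (fun v' => fderiv ℝ T (u, v') (1, 0))
      (fderiv ℝ (fderiv ℝ T) (u, v) (0, 1) (1, 0)) v := by
    rw [← fderiv_partial _ _ ht]
    exact slice_v_hasDerivAt u v (hpt1 (u, v))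
  have eq2 : fderiv ℝ (fderiv ℝ X) (u, v) (0, 1) (1, 0)
      = fderiv ℝ Cin (u, v) (0, 1) * fderiv ℝ T (u, v) (1, 0)
        + cin u v * fderiv ℝ (fderiv ℝ T) (u, v) (0, 1) (1, 0) := by
    rw [← hd2L, heq2.deriv_eq, (hCinslice.fun_mul hTslice2).deriv]
  -- characteristic relations at the point
  have hx2 : fderiv ℝ X (u, v) (0, 1) = cout u v * fderiv ℝ T (u, v) (0, 1) := by
    rw [← cx_v u v, ← ct_v u v]; exact hcharv u v huv
  have hx1 : fderiv ℝ X (u, v) (1, 0) = cin u v * fderiv ℝ T (u, v) (1, 0) := by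
    rw [← cx_u u v, ← ct_u u v]; exact hcharu u v huv
  -- rewrite the goal
  have hgoalL : deriv (fun u' => deriv (fun v' => x u' v') v) u
      = fderiv ℝ (fderiv ℝ X) (u, v) (1, 0) (0, 1) := by
    have : (fun u' => deriv (fun v' => x u' v') v) = (fun u' => fderiv ℝ X (u', v) (0, 1)) := by
      funext u'; exact cx_v u' v
    rw [this]; exact hd1L
  rw [hgoalL, cc_v, cc_u, cx_u u v, cx_v u v]
  -- algebra
  set a := cout u v
  set b := cin u v
  set t1 := fderiv ℝ T (u, v) (1, 0)
  set t2 := fderiv ℝ T (u, v) (0, 1)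
  set Au := fderiv ℝ Cout (u, v) (1, 0)
  set Bv := fderiv ℝ Cin (u, v) (0, 1)
  have ha : a ≠ 0 := hcout0 u v huv
  have hb : b ≠ 0 := hcin0 u v huv
  have hab : a - b ≠ 0 := sub_ne_zero.mpr (hne u v huv)
  rw [hx1, hx2, symX] at *
  rw [symT] at eq1
  have key : (a - b) * ((fderiv ℝ (fderiv ℝ X) (u, v)) (0, 1)) (1, 0)
      = a * (Bv * t1) - b * (Au * t2) := by
    linear_combination a * eq2 - b * eq1
  field_simp
  linear_combination key
end
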